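/- Let n ≥ 1, μ ∈ {1,…,n}, s = ⌊n/μ⌋, and suppose n − μs is even. Let ω ∈ ℝ and set σ_0 = ω, σ_μ = σ_{−μ} = 1, σ_k = 0 for every other integer k with −(n−1) ≤ k ≤ n. If there exist pairwise distinct complex numbers z_1,…,z_n with |z_j| = 1 and nonzero real numbers X_1,…,X_n such that ∑_{j=1}^n X_j z_j^l = σ_l for every integer l with −(n−1) ≤ l ≤ n, then U_s(ω/2) = 1 or U_s(ω/2) = −1, where U_s is the Chebyshev polynomial of the second kind. -/

import Mathlib

open Polynomial Finset

noncomputable def chebc (ω : ℝ) : ℕ → ℝ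
  | 0 => 1
  | 1 => -ω
  | (t+2) => -ω * chebc ω (t+1) - chebc ω t

lemma chebc_eq (ω : ℝ) : ∀ t : ℕ, chebc ω t
    = (-1)^t * Polynomial.eval (ω/2) (Polynomial.Chebyshev.U ℝ (t : ℤ))
  | 0 => by simp [chebc, Polynomial.Chebyshev.U_zero]
  | 1 => by
      simp [chebc, Polynomial.Chebyshev.U_one]; ring
  | (t+2) => by
      have h1 := chebc_eq ω (t+1)
      have h0 := chebc_eq ω t
      have hU := Polynomial.Chebyshev.U_add_two ℝ (t:ℤ)
      have hc : ((t+2 : ℕ) : ℤ) = (t:ℤ) + 2 := by push_cast; ring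
      have hc1 : ((t+1 : ℕ) : ℤ) = (t:ℤ) + 1 := by push_cast; ring
      rw [chebc, h1, h0, hc, hU, hc1]
      simp [Polynomial.eval_mul, Polynomial.eval_sub]
      ring

lemma vand (T : Finset ℂ) (h0 : ∀ u ∈ T, u ≠ 0) (e : ℂ → ℂ) (κ : ℤ) (N : ℕ)
    (hcard : T.card ≤ N)
    (hm : ∀ i : ℕ, i < N → ∑ u ∈ T, e u * u ^ (κ + i) = 0) :
    ∀ u0 ∈ T, e u0 = 0 := by
  intro u0 hu0
  set p : Polynomial ℂ := ∏ v ∈ T.erase u0, (X - C v) with hp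
  have hdeg : p.natDegree < N := by
    have h1 : p.natDegree = (T.erase u0).card := by
      rw [hp, Polynomial.natDegree_prod]
      · simp [Polynomial.natDegree_X_sub_C]
      · intro v _; exact Polynomial.X_sub_C_ne_zero v
    rw [h1, Finset.card_erase_of_mem hu0]
    have : 1 ≤ T.card := Finset.card_pos.mpr ⟨u0, hu0⟩
    omega
  have key : ∑ u ∈ T, e u * u ^ κ * p.eval u = 0 := by
    have expand : ∀ u ∈ T, e u * u ^ κ * p.eval u
        = ∑ i ∈ Finset.range N, p.coeff i * (e u * u ^ (κ + i)) := by
      intro u hu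
      rw [Polynomial.eval_eq_sum_range' hdeg, Finset.mul_sum]
      refine Finset.sum_congr rfl fun i _ => ?_
      rw [zpow_add₀ (h0 u hu), zpow_natCast]
      ring
    rw [Finset.sum_congr rfl expand, Finset.sum_comm]
    refine Finset.sum_eq_zero fun i hi => ?_
    rw [← Finset.mul_sum, hm i (Finset.mem_range.mp hi), mul_zero]
  have single : ∑ u ∈ T, e u * u ^ κ * p.eval u = e u0 * u0 ^ κ * p.eval u0 := by
    refine Finset.sum_eq_single u0 (fun u hu hne => ?_) (fun h => absurd hu0 h)
    have : p.eval u = 0 := by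
      rw [hp, Polynomial.eval_prod]
      exact Finset.prod_eq_zero (Finset.mem_erase.mpr ⟨hne, hu⟩) (by simp)
    rw [this, mul_zero]
  rw [single] at key
  have h1 : (u0 : ℂ) ^ κ ≠ 0 := zpow_ne_zero κ (h0 u0 hu0)
  have h2 : p.eval u0 ≠ 0 := by
    rw [hp, Polynomial.eval_prod]
    refine Finset.prod_ne_zero_iff.mpr fun v hv => ?_
    simp only [Polynomial.eval_sub, Polynomial.eval_X, Polynomial.eval_C]
    exact sub_ne_zero.mpr (Ne.symm (Finset.mem_erase.mp hv).1)
  rcases mul_eq_zero.mp key with h | h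
  · rcases mul_eq_zero.mp h with h | h
    · exact h
    · exact absurd h h1
  · exact absurd h h2

lemma reverse_finset_prod {ι : Type*} (s : Finset ι) (f : ι → Polynomial ℂ) :
    (∏ i ∈ s, f i).reverse = ∏ i ∈ s, (f i).reverse := by
  classical
  induction s using Finset.induction_on with
  | empty => simp only [Finset.prod_empty, ← Polynomial.C_1, Polynomial.reverse_C]
  | insert _ _ h ih =>
      rw [Finset.prod_insert h, Finset.prod_insert h, Polynomial.reverse_mul_of_domain, ih]

lemma reverse_X_sub_C' (a : ℂ) (ha : a ≠ 0) :
    (Polynomial.X - Polynomial.C a).reverse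
      = Polynomial.C (-a) * (Polynomial.X - Polynomial.C a⁻¹) := by
  have h1 : (Polynomial.X - Polynomial.C a).natDegree = 1 := Polynomial.natDegree_X_sub_C a
  rw [Polynomial.reverse, h1, Polynomial.reflect_sub, Polynomial.reflect_C]
  have h2 : Polynomial.reflect 1 (Polynomial.X : Polynomial ℂ) = 1 := by
    simpa using Polynomial.reflect_monomial 1 1 (R := ℂ)
  rw [h2, mul_sub, ← Polynomial.C_mul]
  have h3 : -a * a⁻¹ = -1 := by field_simp
  rw [h3]
  simp only [Polynomial.C_neg, Polynomial.C_1, pow_one]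
  ring

lemma chain (n μ s' : ℕ) (hμ1 : 1 ≤ μ) (ω : ℝ) (a : ℕ → ℂ)
    (hrec : ∀ m : ℕ, m + 1 ≤ n →
      (ω:ℂ) * a m + a (m + μ) + (if μ ≤ m then a (m - μ) else 0) = 0)
    (r : ℕ) (hr : r < μ) (hrs : r + s' * μ ≤ n) :
    ∀ t, t ≤ s' → a (r + t * μ) = a r * ((chebc ω t : ℝ) : ℂ) := by
  intro t
  induction t using Nat.strong_induction_on with
  | _ t ih =>
    match t with
    | 0 => intro _; simp [chebc]
    | 1 =>
      intro h1
      have hsμ : μ ≤ s' * μ := Nat.le_mul_of_pos_left μ (by omega)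
      have hm := hrec r (by omega)
      rw [if_neg (by omega)] at hm
      have : a (r + μ) = -(ω:ℂ) * a r := by linear_combination hm
      simp only [one_mul, this, chebc]
      push_cast
      ring
    | (t+2) =>
      intro h2
      have e1 : (t+2)*μ = (t+1)*μ + μ := by ring
      have e2 : (t+1)*μ = t*μ + μ := by ring
      have hle : (t+2)*μ ≤ s'*μ := Nat.mul_le_mul_right μ (by omega)
      have h1 : a (r + (t+1)*μ) = a r * ((chebc ω (t+1) : ℝ) : ℂ) :=
        ih (t+1) (by omega) (by omega)
      have h0 : a (r + t*μ) = a r * ((chebc ω t : ℝ) : ℂ) := ih t (by omega) (by omega)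
      have hm := hrec (r + (t+1)*μ) (by omega)
      rw [if_pos (by omega)] at hm
      have i1 : r + (t+1)*μ + μ = r + (t+2)*μ := by omega
      have i2 : r + (t+1)*μ - μ = r + t*μ := by omega
      rw [i1, i2] at hm
      have : a (r + (t+2)*μ) = -(ω:ℂ) * a (r + (t+1)*μ) - a (r + t*μ) := by
        linear_combination hm
      rw [this, h1, h0]
      show _ = a r * ((chebc ω (t+2) : ℝ) : ℂ)
      rw [chebc]
      push_cast
      ring
/-- necessary condition U_s(ω/2) = ±1 for (ℬ)-regular solvability of the full
moment system when n - μ⌊n/μ⌋ is even. -/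
theorem stmt8 (n μ : ℕ) (hn : 1 ≤ n) (hμ : μ ∈ Finset.Icc 1 n) (ω : ℝ)
    (s : ℕ) (hs : s = n / μ) (heven : Even (n - μ * s))
    (z : Fin n → ℂ) (X : Fin n → ℝ)
    (hz : Function.Injective z) (habs : ∀ j, ‖z j‖ = 1)
    (hX : ∀ j, X j ≠ 0)
    (hmom : ∀ l : ℤ, -((n : ℤ) - 1) ≤ l → l ≤ n →
      ∑ j : Fin n, (X j : ℂ) * z j ^ l =
        if l = 0 then (ω : ℂ) else if l = (μ : ℤ) ∨ l = -(μ : ℤ) then 1 else 0) :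
    Polynomial.eval (ω / 2) (Polynomial.Chebyshev.U ℝ s) = 1 ∨
      Polynomial.eval (ω / 2) (Polynomial.Chebyshev.U ℝ s) = -1 := by
  classical
  obtain ⟨hμ1, hμn⟩ := Finset.mem_Icc.mp hμ
  have hz0 : ∀ j, z j ≠ 0 := by
    intro j h
    have := habs j
    rw [h] at this
    simp at this
  set w : Fin n → ℂ := fun j => (z j)⁻¹ with hwdef
  have hconj : ∀ j, (starRingEnd ℂ) (z j) = w j := by
    intro j
    have h1 : z j * (starRingEnd ℂ) (z j) = 1 := by
      rw [Complex.mul_conj]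
      rw [Complex.normSq_eq_norm_sq, habs j]
      norm_num
    exact (inv_eq_of_mul_eq_one_right h1).symm
  have hwinj : Function.Injective w := fun i j h => hz (inv_injective h)
  have hw0 : ∀ j, w j ≠ 0 := fun j => inv_ne_zero (hz0 j)
  have hmomw : ∀ l : ℤ, -((n : ℤ) - 1) ≤ l → l ≤ n →
      ∑ j : Fin n, (X j : ℂ) * w j ^ l =
        if l = 0 then (ω : ℂ) else if l = (μ : ℤ) ∨ l = -(μ : ℤ) then 1 else 0 := by
    intro l h1 h2
    have hc := congrArg (starRingEnd ℂ) (hmom l h1 h2)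
    rw [map_sum] at hc
    simp only [map_mul, Complex.conj_ofReal, map_zpow₀, hconj] at hc
    rw [hc]
    split_ifs <;> simp
  set T : Finset ℂ := Finset.univ.image z ∪ Finset.univ.image w with hT
  have hzT : ∀ j, z j ∈ T := fun j =>
    Finset.mem_union_left _ (Finset.mem_image_of_mem z (Finset.mem_univ j))
  have hwT : ∀ j, w j ∈ T := fun j =>
    Finset.mem_union_right _ (Finset.mem_image_of_mem w (Finset.mem_univ j))
  have hT0 : ∀ u ∈ T, u ≠ 0 := by
    intro u hu
    rcases Finset.mem_union.mp hu with h | h <;> obtain ⟨j, _, rfl⟩ := Finset.mem_image.mp h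
    exacts [hz0 j, hw0 j]
  have hTcard : T.card ≤ 2 * n := by
    calc T.card ≤ (Finset.univ.image z).card + (Finset.univ.image w).card :=
          Finset.card_union_le _ _
    _ ≤ n + n := by
        have h1 : (Finset.univ.image z).card ≤ n := le_trans Finset.card_image_le (by simp)
        have h2 : (Finset.univ.image w).card ≤ n := le_trans Finset.card_image_le (by simp)
        omega
    _ = 2 * n := by ring
  set e : ℂ → ℂ := fun u =>
    (∑ j ∈ Finset.univ.filter (fun j => z j = u), (X j : ℂ))
      - ∑ j ∈ Finset.univ.filter (fun j => w j = u), (X j : ℂ) with he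
  have hfib : ∀ (f : Fin n → ℂ), (∀ j, f j ∈ T) → ∀ (l : ℤ),
      ∑ u ∈ T, (∑ j ∈ Finset.univ.filter (fun j => f j = u), (X j : ℂ)) * u ^ l
        = ∑ j, (X j : ℂ) * f j ^ l := by
    intro f hmem l
    rw [← Finset.sum_fiberwise_of_maps_to (fun j _ => hmem j) (fun j => (X j : ℂ) * f j ^ l)]
    refine Finset.sum_congr rfl fun u hu => ?_
    rw [Finset.sum_mul]
    refine Finset.sum_congr rfl fun j hj => ?_
    rw [← (Finset.mem_filter.mp hj).2]
  have hesum : ∀ i : ℕ, i < 2 * n → ∑ u ∈ T, e u * u ^ (-((n:ℤ)-1) + i) = 0 := by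
    intro i hi
    set l : ℤ := -((n:ℤ)-1) + i with hl
    have hb1 : -((n:ℤ)-1) ≤ l := by omega
    have hb2 : l ≤ n := by omega
    have h1 := hfib z hzT l
    have h2 := hfib w hwT l
    have hsplit : ∑ u ∈ T, e u * u ^ l
        = (∑ u ∈ T, (∑ j ∈ Finset.univ.filter (fun j => z j = u), (X j : ℂ)) * u ^ l)
          - ∑ u ∈ T, (∑ j ∈ Finset.univ.filter (fun j => w j = u), (X j : ℂ)) * u ^ l := by
      rw [← Finset.sum_sub_distrib]
      refine Finset.sum_congr rfl fun u _ => ?_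
      simp only [he]
      ring
    rw [hsplit, h1, h2, hmom l hb1 hb2, hmomw l hb1 hb2, sub_self]
  have hekill := vand T hT0 e (-((n:ℤ)-1)) (2*n) hTcard hesum
  have himg : Finset.univ.image z ⊆ Finset.univ.image w := by
    intro u hu
    obtain ⟨k, _, rfl⟩ := Finset.mem_image.mp hu
    by_contra hcon
    have hempty : Finset.univ.filter (fun j => w j = z k) = ∅ := by
      rw [Finset.filter_eq_empty_iff]
      intro j _
      exact fun hj => hcon (Finset.mem_image.mpr ⟨j, Finset.mem_univ j, hj⟩)
    have hfz : Finset.univ.filter (fun j => z j = z k) = {k} := by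
      ext j
      simp [hz.eq_iff]
    have h0 : e (z k) = 0 := hekill (z k) (hzT k)
    simp only [he, hempty, hfz, Finset.sum_singleton, Finset.sum_empty, sub_zero] at h0
    exact hX k (by exact_mod_cast h0)
  have himgeq : Finset.univ.image z = Finset.univ.image w :=
    Finset.eq_of_subset_of_card_le himg
      (by rw [Finset.card_image_of_injective _ hwinj, Finset.card_image_of_injective _ hz])
  set P : Polynomial ℂ := ∏ j, (Polynomial.X - Polynomial.C (z j)) with hPdef
  have hPdeg : P.natDegree = n := by
    rw [hPdef, Polynomial.natDegree_prod _ _ (fun j _ => Polynomial.X_sub_C_ne_zero _)]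
    simp [Polynomial.natDegree_X_sub_C]
  have key : ∀ (f : Fin n → ℂ), Function.Injective f →
      (∏ j, (Polynomial.X - Polynomial.C (f j)))
        = ∏ u ∈ Finset.univ.image f, (Polynomial.X - Polynomial.C u) :=
    fun f hf => (Finset.prod_image (g := f) (f := fun u => Polynomial.X - Polynomial.C u)
      (fun x _ y _ h => hf h)).symm
  have hPQ : (∏ j, (Polynomial.X - Polynomial.C (w j))) = P := by
    rw [hPdef, key z hz, key w hwinj, himgeq]
  set γ : ℂ := ∏ j, (-(z j)) with hγdef
  have hγ0 : γ ≠ 0 := Finset.prod_ne_zero_iff.mpr fun j _ => neg_ne_zero.mpr (hz0 j)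
  have hrevP : P.reverse = Polynomial.C γ * P := by
    rw [hPdef, reverse_finset_prod,
      Finset.prod_congr rfl (fun j _ => reverse_X_sub_C' (z j) (hz0 j)),
      Finset.prod_mul_distrib]
    rw [hγdef, (map_prod (Polynomial.C : ℂ →+* Polynomial ℂ) (fun j => -(z j))
      Finset.univ), hPQ, hPdef]
  have hmonic : P.Monic :=
    Polynomial.monic_prod_of_monic _ _ fun j _ => Polynomial.monic_X_sub_C _
  have han : P.coeff n = 1 := by
    have h := hmonic.coeff_natDegree
    rwa [hPdeg] at h
  have hsym : ∀ k, k ≤ n → P.coeff (n - k) = γ * P.coeff k := by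
    intro k hk
    have h1 := Polynomial.coeff_reverse P k
    rw [hrevP, Polynomial.coeff_C_mul, hPdeg, Polynomial.revAt_le hk] at h1
    exact h1.symm
  have hrec : ∀ m : ℕ, m + 1 ≤ n →
      (ω:ℂ) * P.coeff m + P.coeff (m + μ) + (if μ ≤ m then P.coeff (m - μ) else 0) = 0 := by
    intro m hm
    have hzero : ∑ j, (X j : ℂ) * (z j) ^ (-(m:ℤ)) * P.eval (z j) = 0 := by
      refine Finset.sum_eq_zero fun j _ => ?_
      have hj : P.eval (z j) = 0 := by
        rw [hPdef, Polynomial.eval_prod]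
        exact Finset.prod_eq_zero (Finset.mem_univ j) (by simp)
      rw [hj, mul_zero]
    have hexp : ∀ j : Fin n, (X j : ℂ) * (z j) ^ (-(m:ℤ)) * P.eval (z j)
        = ∑ k ∈ Finset.range (n+1), P.coeff k * ((X j : ℂ) * (z j) ^ ((k:ℤ) - m)) := by
      intro j
      rw [Polynomial.eval_eq_sum_range' (n := n+1) (by rw [hPdeg]; omega), Finset.mul_sum]
      refine Finset.sum_congr rfl fun k _ => ?_
      rw [show ((k:ℤ) - m) = -(m:ℤ) + k by ring, zpow_add₀ (hz0 j), zpow_natCast]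
      ring
    rw [Finset.sum_congr rfl (fun j _ => hexp j), Finset.sum_comm] at hzero
    have hσ : ∀ k ∈ Finset.range (n+1),
        ∑ j, P.coeff k * ((X j:ℂ) * z j ^ ((k:ℤ) - m))
        = P.coeff k * (if (k:ℤ) - m = 0 then (ω:ℂ)
            else if (k:ℤ) - m = μ ∨ (k:ℤ) - m = -(μ:ℤ) then 1 else 0) := by
      intro k hk
      simp only [Finset.mem_range] at hk
      rw [← Finset.mul_sum, hmom ((k:ℤ) - m) (by omega) (by omega)]
    rw [Finset.sum_congr rfl hσ] at hzero
    have hpt : ∀ k ∈ Finset.range (n+1),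
        P.coeff k * (if (k:ℤ) - m = 0 then (ω:ℂ)
            else if (k:ℤ) - m = μ ∨ (k:ℤ) - m = -(μ:ℤ) then 1 else 0)
        = (if k = m then (ω:ℂ) * P.coeff m else 0)
          + ((if k = m + μ then P.coeff k else 0)
          + (if μ ≤ m ∧ k = m - μ then P.coeff k else 0)) := by
      intro k _
      by_cases h1 : k = m
      · subst h1
        rw [if_pos (by omega), if_pos rfl, if_neg (by omega), if_neg (by omega)]
        ring
      · rw [if_neg (fun h => h1 (by omega)), if_neg h1]
        by_cases h2 : k = m + μ
        · rw [if_pos (Or.inl (show ((k:ℤ) - m) = μ by omega)), if_pos h2,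
            if_neg (show ¬(μ ≤ m ∧ k = m - μ) by omega)]
          ring
        · by_cases h3 : μ ≤ m ∧ k = m - μ
          · rw [if_pos (Or.inr (show ((k:ℤ) - m) = -(μ:ℤ) by omega)), if_pos h3, if_neg h2]
            ring
          · rw [if_neg (show ¬((k:ℤ) - m = μ ∨ (k:ℤ) - m = -(μ:ℤ)) by omega),
              if_neg h2, if_neg h3]
            ring
    rw [Finset.sum_congr rfl hpt, Finset.sum_add_distrib, Finset.sum_add_distrib,
      Finset.sum_ite_eq' (Finset.range (n+1)) m (fun _ => (ω:ℂ) * P.coeff m),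
      Finset.sum_ite_eq' (Finset.range (n+1)) (m+μ) (fun k => P.coeff k)] at hzero
    have h3sum : (∑ k ∈ Finset.range (n+1), if μ ≤ m ∧ k = m - μ then P.coeff k else 0)
        = (if μ ≤ m then P.coeff (m - μ) else 0) := by
      by_cases hμm : μ ≤ m
      · simp only [hμm, true_and, if_true]
        rw [Finset.sum_ite_eq' (Finset.range (n+1)) (m - μ) (fun k => P.coeff k),
          if_pos (Finset.mem_range.mpr (by omega))]
      · simp [hμm]
    rw [h3sum, if_pos (Finset.mem_range.mpr (by omega))] at hzero
    have h2sum : (if m + μ ∈ Finset.range (n+1) then P.coeff (m + μ) else 0)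
        = P.coeff (m + μ) := by
      by_cases h : m + μ ∈ Finset.range (n+1)
      · rw [if_pos h]
      · rw [if_neg h]
        exact (Polynomial.coeff_eq_zero_of_natDegree_lt
          (by rw [hPdeg]; simp only [Finset.mem_range] at h; omega)).symm
    rw [h2sum] at hzero
    linear_combination hzero
  have hdvd : n / μ * μ ≤ n := Nat.div_mul_le_self n μ
  set ρ : ℕ := n - μ * s with hρdef
  have hcomm : μ * (n / μ) = n / μ * μ := mul_comm _ _
  have hρn : ρ + s * μ = n := by
    subst hs
    omega
  have hρμ : ρ < μ := by
    have hmod := Nat.mod_add_div n μ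
    have hlt := Nat.mod_lt n (show 0 < μ by omega)
    subst hs
    omega
  have hchain := chain n μ s hμ1 ω P.coeff hrec
  have c1 : P.coeff (ρ + s * μ) = P.coeff ρ * ((chebc ω s : ℝ) : ℂ) :=
    hchain ρ hρμ (by omega) s le_rfl
  have c2 : P.coeff (0 + s * μ) = P.coeff 0 * ((chebc ω s : ℝ) : ℂ) :=
    hchain 0 (by omega) (by omega) s le_rfl
  rw [hρn, han] at c1
  rw [zero_add] at c2
  have ha0 : P.coeff 0 = γ := by
    have h := hsym n le_rfl
    rwa [Nat.sub_self, han, mul_one] at h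
  have haρ : P.coeff (s * μ) = γ * P.coeff ρ := by
    have h := hsym ρ (by omega)
    rwa [show n - ρ = s * μ by omega] at h
  have hcs : P.coeff ρ = ((chebc ω s : ℝ) : ℂ) := by
    refine mul_left_cancel₀ hγ0 ?_
    rw [← haρ, c2, ha0]
  have hone : ((chebc ω s : ℝ) : ℂ) * ((chebc ω s : ℝ) : ℂ) = 1 := by
    nth_rewrite 1 [← hcs]
    exact c1.symm
  have honeR : chebc ω s * chebc ω s = 1 := by exact_mod_cast hone
  rw [chebc_eq] at honeR
  rcases neg_one_pow_eq_or ℝ s with h | h <;> rw [h] at honeR <;>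
    exact mul_self_eq_one_iff.mp (by linear_combination honeR)
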